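/- Let a : ℕ → α be a sequence in the class 𝒞. Then for every k ∈ ℕ, the prefix of a of length 4k admits an optimal palindromic decomposition (i.e. into exactly P_a(4k) palindromes) in which the length of every palindromic factor is divisible by 4. -/

import Mathlib

/-- Membership in the class 𝒞: there exist a letter `c`, bijections `f n`,
and words `w n` with `w 0 = [c]`,
`w (n+1) = w n ++ f n (w n) ++ f n (w n) ++ w n`, `f n (w n) ≠ w n`,
and `w n` is the prefix of `a` of length `4 ^ n`. -/
def InC {α : Type*} (a : ℕ → α) : Prop :=
  ∃ (c : α) (f : ℕ → α ≃ α) (w : ℕ → List α),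
    w 0 = [c] ∧
    (∀ n, w (n + 1) = w n ++ (w n).map (f n) ++ (w n).map (f n) ++ w n) ∧
    (∀ n, (w n).map (f n) ≠ w n) ∧
    (∀ n, w n = (List.range (4 ^ n)).map a)

/-- The factor `a(x) a(x+1) ⋯ a(x+y-1)` of the sequence `a`. -/
def factor {α : Type*} (a : ℕ → α) (x y : ℕ) : List α :=
  (List.range y).map (fun i => a (x + i))

/-- The prefix of `a` of length `n`. -/
def prefixWord {α : Type*} (a : ℕ → α) (n : ℕ) : List α :=
  factor a 0 n

/-- The palindromic length of a finite word: the least number of palindromes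
whose concatenation is the word (0 for the empty word). -/
noncomputable def palLen {α : Type*} (w : List α) : ℕ :=
  sInf {k | ∃ ps : List (List α),
    ps.length = k ∧ (∀ p ∈ ps, p.Palindrome) ∧ ps.flatten = w}

/-- `P a n` is the palindromic length of the prefix of `a` of length `n`. -/
noncomputable def P {α : Type*} (a : ℕ → α) (n : ℕ) : ℕ :=
  palLen (prefixWord a n)

/-- The factor of length `y` at position `x` is embedded into the center of the
factor of length `4 * r` at position `4 * z`. -/
def EmbedCenter (x y z r : ℕ) : Prop :=
  4 * z ≤ x ∧ x + y ≤ 4 * z + 4 * r ∧ x - 4 * z = (4 * z + 4 * r) - (x + y)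

/-- The Thue–Morse sequence: `true` iff the number of ones in the binary
expansion is odd. -/
def thueMorse (n : ℕ) : Bool :=
  (Nat.digits 2 n).count 1 % 2 == 1

set_option linter.unusedSectionVars false
set_option maxHeartbeats 1000000

namespace Stmt19Aux


variable {α : Type*}

def Pal (a : ℕ → α) (x ℓ : ℕ) : Prop := ∀ i j, i + j + 1 = ℓ → a (x + i) = a (x + j)

lemma pal_of_half {a : ℕ → α} {x ℓ : ℕ}
    (h : ∀ i j, i + j + 1 = ℓ → i ≤ j → a (x + i) = a (x + j)) : Pal a x ℓ := by
  intro i j hij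
  rcases le_total i j with h'|h'
  · exact h i j hij h'
  · exact (h j i (by omega) h').symm

lemma factor_length (a : ℕ → α) (x y : ℕ) : (factor a x y).length = y := by
  simp [factor]

lemma factor_add (a : ℕ → α) (x m n : ℕ) :
    factor a x (m + n) = factor a x m ++ factor a (x + m) n := by
  simp only [factor, List.range_add, List.map_append, List.map_map]
  congr 1
  apply List.map_congr_left
  intro i _
  simp [Function.comp]
  congr 1
  omega

lemma pal_factor {a : ℕ → α} {x ℓ : ℕ} (h : Pal a x ℓ) : (factor a x ℓ).Palindrome := by
  apply List.Palindrome.of_reverse_eq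
  apply List.ext_getElem (by simp)
  intro i h1 h2
  rw [List.getElem_reverse]
  simp only [factor, List.getElem_map, List.getElem_range, List.length_map,
    List.length_range] at h1 h2 ⊢
  exact h _ _ (by omega)

lemma pal_of_palindrome {a : ℕ → α} {x ℓ : ℕ} (h : (factor a x ℓ).Palindrome) :
    Pal a x ℓ := by
  have hrev := h.reverse_eq
  intro i j hij
  have h1 : i < ℓ := by omega
  have h2 : j < ℓ := by omega
  have := congrArg (fun l => l[i]?) hrev
  rw [List.getElem?_eq_getElem (by simp [factor]; omega)] at this
  rw [List.getElem?_eq_getElem (by simp [factor]; omega)] at this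
  rw [List.getElem_reverse] at this
  simp only [factor, List.getElem_map, List.getElem_range, List.length_map,
    List.length_range] at this
  have hj : ℓ - 1 - i = j := by omega
  rw [hj] at this
  exact (Option.some_injective _ this).symm

section Struct
variable {a : ℕ → α}
  (e3 : ∀ i, a (4*i+3) = a (4*i))
  (e12 : ∀ i, a (4*i+2) = a (4*i+1))
  (hne : ∀ i, a (4*i) ≠ a (4*i+1))

include e3 e12 hne

lemma adjEq {m : ℕ} (hm : a m = a (m+1)) : m % 4 = 1 ∨ m % 4 = 3 := by
  rcases (by omega : m % 4 = 0 ∨ m % 4 = 1 ∨ m % 4 = 2 ∨ m % 4 = 3) with h|h|h|h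
  · obtain ⟨i, rfl⟩ : ∃ i, m = 4*i := ⟨m/4, by omega⟩
    exact absurd hm (hne i)
  · exact Or.inl h
  · obtain ⟨i, rfl⟩ : ∃ i, m = 4*i+2 := ⟨m/4, by omega⟩
    rw [show 4*i+2+1 = 4*i+3 by ring, e3 i, e12 i] at hm
    exact absurd hm.symm (hne i)
  · exact Or.inr h

lemma d2Eq {m : ℕ} (hm : a m = a (m+2)) : m % 4 = 2 ∨ m % 4 = 3 := by
  rcases (by omega : m % 4 = 0 ∨ m % 4 = 1 ∨ m % 4 = 2 ∨ m % 4 = 3) with h|h|h|h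
  · obtain ⟨i, rfl⟩ : ∃ i, m = 4*i := ⟨m/4, by omega⟩
    rw [e12 i] at hm
    exact absurd hm (hne i)
  · obtain ⟨i, rfl⟩ : ∃ i, m = 4*i+1 := ⟨m/4, by omega⟩
    rw [show 4*i+1+2 = 4*i+3 by ring, e3 i] at hm
    exact absurd hm.symm (hne i)
  · exact Or.inl h
  · exact Or.inr h

lemma lemEven {b h : ℕ} (hp : Pal a b (2*h)) (h1 : 1 ≤ h) : (b + h) % 2 = 0 := by
  have := hp (h-1) h (by omega)
  have hadj : a (b+h-1) = a (b+h-1+1) := by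
    rw [show b + (h-1) = b+h-1 by omega] at this
    rw [show b+h-1+1 = b + h by omega]
    exact this
  have := adjEq e3 e12 hne hadj
  omega

lemma lemOdd3 {b : ℕ} (hp : Pal a b 3) : b % 4 = 2 ∨ b % 4 = 3 := by
  have := hp 0 2 (by omega)
  simp only [Nat.add_zero] at this
  exact d2Eq e3 e12 hne this

lemma lemOddLong {b h : ℕ} (hp : Pal a b (2*h+1)) (h2 : 2 ≤ h) : False := by
  have hA : a (b+h-1) = a (b+h-1+2) := by
    have := hp (h-1) (h+1) (by omega)
    rw [show b + (h-1) = b+h-1 by omega, show b + (h+1) = b+h-1+2 by omega] at this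
    exact this
  have hB : a (b+h-2) = a (b+h-2+4) := by
    have := hp (h-2) (h+2) (by omega)
    rw [show b + (h-2) = b+h-2 by omega, show b + (h+2) = b+h-2+4 by omega] at this
    exact this
  rcases d2Eq e3 e12 hne hA with hc|hc
  · -- b+h-1 = 4i+2
    obtain ⟨i, hi⟩ : ∃ i, b+h-1 = 4*i+2 := ⟨(b+h-1)/4, by omega⟩
    rw [hi] at hA
    rw [show b+h-2 = 4*i+1 by omega] at hB
    rw [e12 i] at hA
    rw [show 4*i+2+2 = 4*(i+1) by ring] at hA
    rw [show 4*i+1+4 = 4*(i+1)+1 by ring] at hB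
    exact hne (i+1) (hA.symm.trans hB)
  · -- b+h-1 = 4i+3
    obtain ⟨i, hi⟩ : ∃ i, b+h-1 = 4*i+3 := ⟨(b+h-1)/4, by omega⟩
    rw [hi] at hA
    rw [show b+h-2 = 4*i+2 by omega] at hB
    rw [show 4*i+3+2 = 4*(i+1)+1 by ring] at hA
    rw [show 4*i+2+4 = 4*(i+1)+2 by ring, e12 (i+1)] at hB
    rw [e12 i] at hB
    -- hA : a (4i+3) = a (4(i+1)+1), hB : a (4i+1) = a (4(i+1)+1)
    rw [e3 i] at hA
    exact hne i (hA.trans hB.symm)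

lemma palBlock (q : ℕ) : Pal a (4*q) 4 := by
  apply pal_of_half
  intro i j hij hle
  rcases (by omega : i = 0 ∧ j = 3 ∨ i = 1 ∧ j = 2) with ⟨rfl, rfl⟩|⟨rfl, rfl⟩
  · rw [Nat.add_zero]
    exact (e3 q).symm
  · exact (e12 q).symm

lemma ext1 {q s : ℕ} (hp : Pal a (4*q+1) (4*s+2)) : Pal a (4*q) (4*s+4) := by
  apply pal_of_half
  intro i j hij hle
  rcases Nat.eq_zero_or_pos i with rfl|hi
  · -- j = 4s+3
    have hj : j = 4*s+3 := by omega
    subst hj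
    rw [show 4*q + (4*s+3) = 4*(q+s)+3 by ring, e3 (q+s), Nat.add_zero]
    rcases Nat.eq_zero_or_pos s with rfl|hs
    · simp
    · have := hp 2 (4*s-1) (by omega)
      rw [show 4*q+1+2 = 4*q+3 by ring, show 4*q+1+(4*s-1) = 4*(q+s) by omega] at this
      rw [show 4*(q+s) = 4*q + 4*s by ring] at this ⊢
      rw [← this, e3 q]
  · have := hp (i-1) (j-1) (by omega)
    rw [show 4*q+1+(i-1) = 4*q+i by omega, show 4*q+1+(j-1) = 4*q+j by omega] at this
    exact this

lemma ext2 {q s : ℕ} (hs : 1 ≤ s) (hp : Pal a (4*q+2) (4*s)) : Pal a (4*q) (4*s+4) := by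
  apply pal_of_half
  intro i j hij hle
  rcases (by omega : i = 0 ∨ i = 1 ∨ 2 ≤ i) with rfl|rfl|hi
  · have hj : j = 4*s+3 := by omega
    subst hj
    rw [show 4*q + (4*s+3) = 4*(q+s)+3 by ring, e3 (q+s), Nat.add_zero]
    have := hp 1 (4*s-2) (by omega)
    rw [show 4*q+2+1 = 4*q+3 by ring, show 4*q+2+(4*s-2) = 4*(q+s) by omega] at this
    rw [← this, e3 q]
  · have hj : j = 4*s+2 := by omega
    subst hj
    rw [show 4*q+1 = 4*q+1 from rfl]
    have h1 := hp 0 (4*s-1) (by omega)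
    rw [Nat.add_zero, show 4*q+2+(4*s-1) = 4*(q+s)+1 by omega] at h1
    rw [e12 q] at h1
    rw [show 4*q + (4*s+2) = 4*(q+s)+2 by ring, e12 (q+s)]
    exact h1
  · have := hp (i-2) (j-2) (by omega)
    rw [show 4*q+2+(i-2) = 4*q+i by omega, show 4*q+2+(j-2) = 4*q+j by omega] at this
    exact this

end Struct

lemma shrink1 {a : ℕ → α} {x m : ℕ} (hp : Pal a x (m+2)) : Pal a (x+1) m := by
  intro i j hij
  have := hp (i+1) (j+1) (by omega)
  rw [show x+(i+1) = x+1+i by ring, show x+(j+1) = x+1+j by ring] at this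
  exact this

lemma shrink2 {a : ℕ → α} {x m : ℕ} (hp : Pal a x (m+4)) : Pal a (x+2) m := by
  have := shrink1 (shrink1 hp)
  rwa [show x+1+1 = x+2 by ring] at this

def Chain (a : ℕ → α) : ℕ → List ℕ → Prop
  | _, [] => True
  | b, ℓ :: t => Pal a b ℓ ∧ Chain a (b + ℓ) t

def Chain4 (a : ℕ → α) : ℕ → List ℕ → Prop
  | _, [] => True
  | b, ℓ :: t => Pal a b ℓ ∧ ℓ % 4 = 0 ∧ Chain4 a (b + ℓ) t

def phi (b A : ℕ) : ℕ := if b = A + 2 ∨ b = A + 3 ∨ A = b + 2 then 1 else 0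

lemma main {a : ℕ → α}
    (e3 : ∀ i, a (4*i+3) = a (4*i))
    (e12 : ∀ i, a (4*i+2) = a (4*i+1))
    (hne : ∀ i, a (4*i) ≠ a (4*i+1)) :
    ∀ (ℓs : List ℕ) (b A : ℕ), Chain a b ℓs → A % 4 = 0 → A ≤ b + 2 → b ≤ A + 3 →
      (b + ℓs.sum) % 4 = 0 →
      ∃ ms : List ℕ, Chain4 a A ms ∧ A + ms.sum = b + ℓs.sum ∧
        ms.length ≤ ℓs.length + phi b A := by
  intro ℓs
  induction ℓs with
  | nil =>
    intro b A hch hA4 hb1 hb2 hsum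
    simp only [List.sum_nil, Nat.add_zero] at hsum ⊢
    have : A = b := by omega
    subst this
    exact ⟨[], trivial, by simp, by simp⟩
  | cons ℓ rest IH =>
    intro b A hch hA4 hb1 hb2 hsum
    obtain ⟨hPal, hch⟩ := hch
    simp only [List.sum_cons] at hsum ⊢
    simp only [List.length_cons]
    rcases Nat.eq_zero_or_pos ℓ with rfl | hpos
    · simp only [Nat.add_zero] at hch
      obtain ⟨ms, hc4, hsms, hlms⟩ := IH b A hch hA4 hb1 hb2 (by omega)
      exact ⟨ms, hc4, by omega, by omega⟩
    rcases Nat.even_or_odd ℓ with he | ho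
    · -- even piece
      obtain ⟨h, hℓ⟩ : ∃ h, ℓ = 2*h := ⟨ℓ/2, by rcases he with ⟨r,hr⟩; omega⟩
      subst hℓ
      have hE : (b + h) % 2 = 0 := lemEven e3 e12 hne hPal (by omega)
      obtain ⟨q, rfl⟩ : ∃ q, A = 4*q := ⟨A/4, by omega⟩
      rcases (by omega : b = 4*q ∨ b = 4*q + 1 ∨ b = 4*q + 2 ∨ b = 4*q + 3 ∨
          4*q = b + 1 ∨ 4*q = b + 2) with hst|hst|hst|hst|hst|hst
      · -- o = 0 : emit the piece itself
        subst hst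
        obtain ⟨g, rfl⟩ : ∃ g, h = 2*g := ⟨h/2, by omega⟩
        rw [show 4*q + 2*(2*g) = 4*(q+g) by ring] at hch
        obtain ⟨ms, hc4, hsms, hlms⟩ := IH (4*(q+g)) (4*(q+g)) hch (by omega)
          (by omega) (by omega) (by omega)
        refine ⟨(4*g) :: ms, ⟨?_, by omega, ?_⟩, ?_, ?_⟩
        · rw [show (4*g : ℕ) = 2*(2*g) by ring]; exact hPal
        · rw [show 4*q + 4*g = 4*(q+g) by ring]; exact hc4
        · simp only [List.sum_cons]; omega
        · simp only [List.length_cons]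
          unfold phi at hlms ⊢
          split_ifs at hlms ⊢ <;> omega
      · -- o = 1 : extend by 1 (b = 4q+1), ℓ ≡ 2 mod 4
        subst hst
        obtain ⟨g, hg⟩ : ∃ g, h = 2*g+1 := ⟨h/2, by omega⟩
        subst hg
        have hp' : Pal a (4*q) (4*g+4) := ext1 e3 e12 hne (by rw [show 4*g+2 = 2*(2*g+1) by ring]; exact hPal)
        rw [show 4*q+1 + 2*(2*g+1) = (4*(q+g+1)-1) by omega] at hch
        obtain ⟨ms, hc4, hsms, hlms⟩ := IH (4*(q+g+1)-1) (4*(q+g+1)) hch (by omega)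
          (by omega) (by omega) (by omega)
        refine ⟨(4*g+4) :: ms, ⟨hp', by omega, ?_⟩, ?_, ?_⟩
        · rw [show 4*q + (4*g+4) = 4*(q+g+1) by ring]; exact hc4
        · simp only [List.sum_cons]; omega
        · simp only [List.length_cons]
          unfold phi at hlms ⊢
          split_ifs at hlms ⊢ <;> omega
      · -- o = 2 : extend by 2 (b = 4q+2), ℓ ≡ 0 mod 4, ℓ ≥ 4
        subst hst
        obtain ⟨g, hg⟩ : ∃ g, h = 2*g ∧ 1 ≤ g := ⟨h/2, by omega⟩
        obtain ⟨hg, hg1⟩ := hg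
        subst hg
        have hp' : Pal a (4*q) (4*g+4) := ext2 e3 e12 hne hg1 (by rw [show 4*g = 2*(2*g) by ring]; exact hPal)
        rw [show 4*q+2 + 2*(2*g) = (4*(q+g+1)-2) by omega] at hch
        obtain ⟨ms, hc4, hsms, hlms⟩ := IH (4*(q+g+1)-2) (4*(q+g+1)) hch (by omega)
          (by omega) (by omega) (by omega)
        refine ⟨(4*g+4) :: ms, ⟨hp', by omega, ?_⟩, ?_, ?_⟩
        · rw [show 4*q + (4*g+4) = 4*(q+g+1) by ring]; exact hc4
        · simp only [List.sum_cons]; omega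
        · simp only [List.length_cons]
          unfold phi at hlms ⊢
          split_ifs at hlms ⊢ <;> omega
      · -- o = 3 : emit block + shrunk core (b = 4q+3), ℓ ≡ 2 mod 4
        subst hst
        obtain ⟨g, hg⟩ : ∃ g, h = 2*g+1 := ⟨h/2, by omega⟩
        subst hg
        have hcore : Pal a (4*q+4) (4*g) := by
          have := shrink1 (x := 4*q+3) (m := 4*g)
            (by rw [show 4*g+2 = 2*(2*g+1) by ring]; exact hPal)
          rwa [show 4*q+3+1 = 4*q+4 by ring] at this
        rw [show 4*q+3 + 2*(2*g+1) = 4*(q+g+1)+1 by ring] at hch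
        obtain ⟨ms, hc4, hsms, hlms⟩ := IH (4*(q+g+1)+1) (4*(q+g+1)) hch (by omega)
          (by omega) (by omega) (by omega)
        refine ⟨4 :: (4*g) :: ms, ⟨palBlock e3 e12 hne q, by omega, ?_, by omega, ?_⟩, ?_, ?_⟩
        · rw [show 4*q + 4 = 4*q+4 from rfl]; exact hcore
        · rw [show 4*q + 4 + 4*g = 4*(q+g+1) by ring]; exact hc4
        · simp only [List.sum_cons]; omega
        · simp only [List.length_cons]
          unfold phi at hlms ⊢
          split_ifs at hlms ⊢ <;> omega
      · -- o = -1 : A = b+1, b = 4q-1 ≡ 3 : shrink by 1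
        have hb : b = 4*q - 1 := by omega
        have hq1 : 1 ≤ q := by omega
        obtain ⟨g, hg⟩ : ∃ g, h = 2*g+1 := ⟨h/2, by omega⟩
        subst hg
        have hcore : Pal a (4*q) (4*g) := by
          have := shrink1 (x := b) (m := 4*g)
            (by rw [show 4*g+2 = 2*(2*g+1) by ring]; exact hPal)
          rwa [show b+1 = 4*q by omega] at this
        rw [show b + 2*(2*g+1) = 4*(q+g)+1 by omega] at hch
        obtain ⟨ms, hc4, hsms, hlms⟩ := IH (4*(q+g)+1) (4*(q+g)) hch (by omega)
          (by omega) (by omega) (by omega)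
        refine ⟨(4*g) :: ms, ⟨hcore, by omega, ?_⟩, ?_, ?_⟩
        · rw [show 4*q + 4*g = 4*(q+g) by ring]; exact hc4
        · simp only [List.sum_cons]; omega
        · simp only [List.length_cons]
          unfold phi at hlms ⊢
          split_ifs at hlms ⊢ <;> omega
      · -- o = -2 : A = b+2, b ≡ 2 : shrink by 2
        have hb : b = 4*q - 2 := by omega
        have hq1 : 1 ≤ q := by omega
        obtain ⟨g, hg⟩ : ∃ g, h = 2*g ∧ 1 ≤ g := ⟨h/2, by omega⟩
        obtain ⟨hg, hg1⟩ := hg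
        subst hg
        have hcore : Pal a (4*q) (4*g-4) := by
          have := shrink2 (x := b) (m := 4*g-4)
            (by rw [show 4*g-4+4 = 2*(2*g) by omega]; exact hPal)
          rwa [show b+2 = 4*q by omega] at this
        rw [show b + 2*(2*g) = 4*(q+g)-2 by omega] at hch
        obtain ⟨ms, hc4, hsms, hlms⟩ := IH (4*(q+g)-2) (4*(q+g)-4) hch (by omega)
          (by omega) (by omega) (by omega)
        refine ⟨(4*g-4) :: ms, ⟨hcore, by omega, ?_⟩, ?_, ?_⟩
        · rw [show 4*q + (4*g-4) = 4*(q+g)-4 by omega]; exact hc4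
        · simp only [List.sum_cons]; omega
        · simp only [List.length_cons]
          unfold phi at hlms ⊢
          split_ifs at hlms ⊢ <;> omega
    · -- odd piece
      obtain ⟨h, hℓ⟩ := ho
      obtain ⟨q, rfl⟩ : ∃ q, A = 4*q := ⟨A/4, by omega⟩
      rcases (by omega : ℓ = 1 ∨ ℓ = 3 ∨ 2 ≤ h) with h1|h3|hh
      · -- single letter
        subst h1
        rcases (by omega : b = 4*q ∨ b = 4*q + 1 ∨ b = 4*q + 2 ∨ b = 4*q + 3 ∨
            4*q = b + 1 ∨ 4*q = b + 2) with hst|hst|hst|hst|hst|hst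
        · subst hst
          obtain ⟨ms, hc4, hsms, hlms⟩ := IH (4*q+1) (4*q) hch (by omega)
            (by omega) (by omega) (by omega)
          refine ⟨ms, hc4, by omega, ?_⟩
          unfold phi at hlms ⊢
          split_ifs at hlms ⊢ <;> omega
        · subst hst
          rw [show 4*q+1+1 = 4*q+2 by ring] at hch
          obtain ⟨ms, hc4, hsms, hlms⟩ := IH (4*q+2) (4*q) hch (by omega)
            (by omega) (by omega) (by omega)
          refine ⟨ms, hc4, by omega, ?_⟩
          unfold phi at hlms ⊢
          split_ifs at hlms ⊢ <;> omega
        · subst hst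
          rw [show 4*q+2+1 = 4*q+3 by ring] at hch
          obtain ⟨ms, hc4, hsms, hlms⟩ := IH (4*q+3) (4*q) hch (by omega)
            (by omega) (by omega) (by omega)
          refine ⟨ms, hc4, by omega, ?_⟩
          unfold phi at hlms ⊢
          split_ifs at hlms ⊢ <;> omega
        · subst hst
          rw [show 4*q+3+1 = 4*q+4 by ring] at hch
          obtain ⟨ms, hc4, hsms, hlms⟩ := IH (4*q+4) (4*q+4) hch (by omega)
            (by omega) (by omega) (by omega)
          refine ⟨4 :: ms, ⟨palBlock e3 e12 hne q, by omega, ?_⟩, ?_, ?_⟩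
          · rw [show 4*q + 4 = 4*q+4 from rfl]; exact hc4
          · simp only [List.sum_cons]; omega
          · simp only [List.length_cons]
            unfold phi at hlms ⊢
            split_ifs at hlms ⊢ <;> omega
        · rw [show b+1 = 4*q by omega] at hch
          obtain ⟨ms, hc4, hsms, hlms⟩ := IH (4*q) (4*q) hch (by omega)
            (by omega) (by omega) (by omega)
          refine ⟨ms, hc4, by omega, ?_⟩
          unfold phi at hlms ⊢
          split_ifs at hlms ⊢ <;> omega
        · rw [show b+1 = 4*q-1 by omega] at hch
          obtain ⟨ms, hc4, hsms, hlms⟩ := IH (4*q-1) (4*q) hch (by omega)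
            (by omega) (by omega) (by omega)
          refine ⟨ms, hc4, by omega, ?_⟩
          unfold phi at hlms ⊢
          split_ifs at hlms ⊢ <;> omega
      · -- length-3 piece
        subst h3
        have hb24 := lemOdd3 e3 e12 hne hPal
        rcases (by omega : b = 4*q + 2 ∨ b = 4*q + 3 ∨ 4*q = b + 1 ∨ 4*q = b + 2)
          with hst|hst|hst|hst
        · subst hst
          rw [show 4*q+2+3 = 4*q+5 by ring] at hch
          obtain ⟨ms, hc4, hsms, hlms⟩ := IH (4*q+5) (4*q+4) hch (by omega)
            (by omega) (by omega) (by omega)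
          refine ⟨4 :: ms, ⟨palBlock e3 e12 hne q, by omega, ?_⟩, ?_, ?_⟩
          · rw [show 4*q + 4 = 4*q+4 from rfl]; exact hc4
          · simp only [List.sum_cons]; omega
          · simp only [List.length_cons]
            unfold phi at hlms ⊢
            split_ifs at hlms ⊢ <;> omega
        · subst hst
          rw [show 4*q+3+3 = 4*q+6 by ring] at hch
          obtain ⟨ms, hc4, hsms, hlms⟩ := IH (4*q+6) (4*q+4) hch (by omega)
            (by omega) (by omega) (by omega)
          refine ⟨4 :: ms, ⟨palBlock e3 e12 hne q, by omega, ?_⟩, ?_, ?_⟩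
          · rw [show 4*q + 4 = 4*q+4 from rfl]; exact hc4
          · simp only [List.sum_cons]; omega
          · simp only [List.length_cons]
            unfold phi at hlms ⊢
            split_ifs at hlms ⊢ <;> omega
        · rw [show b+3 = 4*q+2 by omega] at hch
          obtain ⟨ms, hc4, hsms, hlms⟩ := IH (4*q+2) (4*q) hch (by omega)
            (by omega) (by omega) (by omega)
          refine ⟨ms, hc4, by omega, ?_⟩
          unfold phi at hlms ⊢
          split_ifs at hlms ⊢ <;> omega
        · rw [show b+3 = 4*q+1 by omega] at hch
          obtain ⟨ms, hc4, hsms, hlms⟩ := IH (4*q+1) (4*q) hch (by omega)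
            (by omega) (by omega) (by omega)
          refine ⟨ms, hc4, by omega, ?_⟩
          unfold phi at hlms ⊢
          split_ifs at hlms ⊢ <;> omega
      · exact ((lemOddLong e3 e12 hne (hℓ ▸ hPal) hh).elim)


variable {α : Type*}

lemma gq1 {β : Type*} (X Y Z W : List β) {j : ℕ} (hj : j < Y.length) :
    (X ++ Y ++ Z ++ W)[X.length + j]? = Y[j]? := by
  rw [List.append_assoc, List.append_assoc,
      List.getElem?_append_right (by omega), Nat.add_sub_cancel_left,
      List.getElem?_append_left hj]

lemma gq2 {β : Type*} (X Y Z W : List β) {j : ℕ} (hj : j < Z.length) :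
    (X ++ Y ++ Z ++ W)[X.length + Y.length + j]? = Z[j]? := by
  rw [List.append_assoc, List.append_assoc,
      List.getElem?_append_right (by omega)]
  rw [show X.length + Y.length + j - X.length = Y.length + j by omega]
  rw [List.getElem?_append_right (by omega), Nat.add_sub_cancel_left,
      List.getElem?_append_left hj]

lemma gq3 {β : Type*} (X Y Z W : List β) {j : ℕ} (hj : j < W.length) :
    (X ++ Y ++ Z ++ W)[X.length + Y.length + Z.length + j]? = W[j]? := by
  rw [List.append_assoc, List.append_assoc,
      List.getElem?_append_right (by omega)]
  rw [show X.length + Y.length + Z.length + j - X.length = Y.length + (Z.length + j) by omega]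
  rw [List.getElem?_append_right (by omega), Nat.add_sub_cancel_left,
      List.getElem?_append_right (by omega), Nat.add_sub_cancel_left]

lemma quarters {a : ℕ → α} {f : ℕ → α ≃ α} {w : ℕ → List α}
    (hrec : ∀ n, w (n + 1) = w n ++ (w n).map (f n) ++ (w n).map (f n) ++ w n)
    (hwp : ∀ n, w n = (List.range (4 ^ n)).map a)
    (n j : ℕ) (hj : j < 4^n) :
    a (4^n + j) = f n (a j) ∧ a (2*4^n + j) = f n (a j) ∧ a (3*4^n + j) = a j := by
  have hpow : (4:ℕ)^(n+1) = 4 * 4^n := by ring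
  have E : (List.range (4^(n+1))).map a =
      (List.range (4^n)).map a ++ ((List.range (4^n)).map a).map (f n)
        ++ ((List.range (4^n)).map a).map (f n) ++ (List.range (4^n)).map a := by
    rw [← hwp, ← hwp, ← hrec, hwp]
  refine ⟨?_, ?_, ?_⟩
  · have t := congrArg (fun l => l[((List.range (4^n)).map a).length + j]?) E
    rw [List.getElem?_map, List.getElem?_range
      (show ((List.range (4^n)).map a).length + j < 4^(n+1) by
        simp only [List.length_map, List.length_range]; omega)] at t
    rw [gq1 _ _ _ _ (by simpa using hj)] at t
    simp only [List.getElem?_map, List.getElem?_range hj, Option.map_some] at t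
    have t2 := Option.some.inj t
    rwa [show ((List.range (4^n)).map a).length + j = 4^n + j by simp] at t2
  · have t := congrArg (fun l =>
      l[((List.range (4^n)).map a).length + (((List.range (4^n)).map a).map (f n)).length + j]?) E
    rw [List.getElem?_map, List.getElem?_range
      (show ((List.range (4^n)).map a).length + (((List.range (4^n)).map a).map (f n)).length + j < 4^(n+1) by
        simp only [List.length_map, List.length_range]; omega)] at t
    rw [gq2 _ _ _ _ (by simpa using hj)] at t
    simp only [List.getElem?_map, List.getElem?_range hj, Option.map_some] at t
    have t2 := Option.some.inj t
    rwa [show ((List.range (4^n)).map a).length + (((List.range (4^n)).map a).map (f n)).length + j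
      = 2*4^n + j by simp only [List.length_map, List.length_range]; omega] at t2
  · have t := congrArg (fun l =>
      l[((List.range (4^n)).map a).length + (((List.range (4^n)).map a).map (f n)).length
        + (((List.range (4^n)).map a).map (f n)).length + j]?) E
    rw [List.getElem?_map, List.getElem?_range
      (show ((List.range (4^n)).map a).length + (((List.range (4^n)).map a).map (f n)).length
        + (((List.range (4^n)).map a).map (f n)).length + j < 4^(n+1) by
        simp only [List.length_map, List.length_range]; omega)] at t
    rw [gq3 _ _ _ _ (by simpa using hj)] at t
    simp only [List.getElem?_map, List.getElem?_range hj, Option.map_some] at t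
    have t2 := Option.some.inj t
    rwa [show ((List.range (4^n)).map a).length + (((List.range (4^n)).map a).map (f n)).length
      + (((List.range (4^n)).map a).map (f n)).length + j
      = 3*4^n + j by simp only [List.length_map, List.length_range]; omega] at t2






lemma blockProp {a : ℕ → α} {c : α} {f : ℕ → α ≃ α} {w : ℕ → List α}
    (hw0 : w 0 = [c])
    (hrec : ∀ n, w (n + 1) = w n ++ (w n).map (f n) ++ (w n).map (f n) ++ w n)
    (hfne : ∀ n, (w n).map (f n) ≠ w n)
    (hwp : ∀ n, w n = (List.range (4 ^ n)).map a) :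
    ∀ i, a (4*i+3) = a (4*i) ∧ a (4*i+2) = a (4*i+1) ∧ a (4*i) ≠ a (4*i+1) := by
  have ha0 : a 0 = c := by
    have := congrArg (fun l => l[0]?) ((hwp 0).symm.trans hw0)
    simpa using this
  have hfc : f 0 c ≠ c := by
    have := hfne 0
    rw [hw0] at this
    simpa using this
  have base : a 3 = a 0 ∧ a 2 = a 1 ∧ a 0 ≠ a 1 := by
    have q := quarters hrec hwp 0 0 (by norm_num)
    norm_num at q
    obtain ⟨q1, q2, q3⟩ := q
    refine ⟨q3, by rw [q1, q2], ?_⟩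
    rw [q1, ha0]
    exact fun hcc => hfc (hcc.symm)
  have aux : ∀ n i, 4*i+3 < 4^(n+1) →
      a (4*i+3) = a (4*i) ∧ a (4*i+2) = a (4*i+1) ∧ a (4*i) ≠ a (4*i+1) := by
    intro n
    induction n with
    | zero =>
      intro i hi
      norm_num at hi
      have : i = 0 := by omega
      subst this
      simpa using base
    | succ n IH =>
      intro i hi
      by_cases hsm : 4*i+3 < 4^(n+1)
      · exact IH i hsm
      · have h1 : (4:ℕ)^(n+1) = 4*4^n := by ring
        have h2 : (4:ℕ)^(n+2) = 16*4^n := by ring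
        have h3 : 0 < (4:ℕ)^n := by positivity
        push_neg at hsm
        rcases (by omega : (4^n ≤ i ∧ i < 2*4^n) ∨ (2*4^n ≤ i ∧ i < 3*4^n) ∨
            (3*4^n ≤ i ∧ i < 4*4^n)) with ⟨hd1, hd2⟩|⟨hd1, hd2⟩|⟨hd1, hd2⟩
        · set i' := i - 4^n with hi'
          have hIH := IH i' (by omega)
          have E0 : a (4*i) = f (n+1) (a (4*i')) := by
            rw [show 4*i = 4^(n+1) + (4*i'+0) by omega]
            exact (by simpa using (quarters hrec hwp (n+1) (4*i'+0) (by omega)).1)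
          have E1 : a (4*i+1) = f (n+1) (a (4*i'+1)) :=  by
            rw [show 4*i+1 = 4^(n+1) + (4*i'+1) by omega]
            exact (quarters hrec hwp (n+1) (4*i'+1) (by omega)).1
          have E2 : a (4*i+2) = f (n+1) (a (4*i'+2)) :=  by
            rw [show 4*i+2 = 4^(n+1) + (4*i'+2) by omega]
            exact (quarters hrec hwp (n+1) (4*i'+2) (by omega)).1
          have E3 : a (4*i+3) = f (n+1) (a (4*i'+3)) :=  by
            rw [show 4*i+3 = 4^(n+1) + (4*i'+3) by omega]
            exact (quarters hrec hwp (n+1) (4*i'+3) (by omega)).1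
          refine ⟨?_, ?_, ?_⟩
          · rw [E3, E0, hIH.1]
          · rw [E2, E1, hIH.2.1]
          · rw [E0, E1]
            intro hcon
            exact hIH.2.2 ((f (n+1)).injective hcon)
        · set i' := i - 2*4^n with hi'
          have hIH := IH i' (by omega)
          have E0 : a (4*i) = f (n+1) (a (4*i')) := by
            rw [show 4*i = 2*4^(n+1) + (4*i'+0) by omega]
            exact (by simpa using (quarters hrec hwp (n+1) (4*i'+0) (by omega)).2.1)
          have E1 : a (4*i+1) = f (n+1) (a (4*i'+1)) :=  by
            rw [show 4*i+1 = 2*4^(n+1) + (4*i'+1) by omega]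
            exact (quarters hrec hwp (n+1) (4*i'+1) (by omega)).2.1
          have E2 : a (4*i+2) = f (n+1) (a (4*i'+2)) :=  by
            rw [show 4*i+2 = 2*4^(n+1) + (4*i'+2) by omega]
            exact (quarters hrec hwp (n+1) (4*i'+2) (by omega)).2.1
          have E3 : a (4*i+3) = f (n+1) (a (4*i'+3)) :=  by
            rw [show 4*i+3 = 2*4^(n+1) + (4*i'+3) by omega]
            exact (quarters hrec hwp (n+1) (4*i'+3) (by omega)).2.1
          refine ⟨?_, ?_, ?_⟩
          · rw [E3, E0, hIH.1]
          · rw [E2, E1, hIH.2.1]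
          · rw [E0, E1]
            intro hcon
            exact hIH.2.2 ((f (n+1)).injective hcon)
        · set i' := i - 3*4^n with hi'
          have hIH := IH i' (by omega)
          have E0 : a (4*i) = a (4*i') := by
            rw [show 4*i = 3*4^(n+1) + (4*i'+0) by omega]
            exact (by simpa using (quarters hrec hwp (n+1) (4*i'+0) (by omega)).2.2)
          have E1 : a (4*i+1) = a (4*i'+1) :=  by
            rw [show 4*i+1 = 3*4^(n+1) + (4*i'+1) by omega]
            exact (quarters hrec hwp (n+1) (4*i'+1) (by omega)).2.2
          have E2 : a (4*i+2) = a (4*i'+2) :=  by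
            rw [show 4*i+2 = 3*4^(n+1) + (4*i'+2) by omega]
            exact (quarters hrec hwp (n+1) (4*i'+2) (by omega)).2.2
          have E3 : a (4*i+3) = a (4*i'+3) :=  by
            rw [show 4*i+3 = 3*4^(n+1) + (4*i'+3) by omega]
            exact (quarters hrec hwp (n+1) (4*i'+3) (by omega)).2.2
          exact ⟨by rw [E3, E0, hIH.1], by rw [E2, E1, hIH.2.1],
            by rw [E0, E1]; exact hIH.2.2⟩
  intro i
  have h3 : 0 < (4:ℕ)^i := by positivity
  have h4 : (4:ℕ)^(i+1) = 4*4^i := by ring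
  have hi4 : i < 4^i := Nat.lt_pow_self (by norm_num)
  exact aux i i (by omega)


lemma singleton_flatten (l : List α) : (l.map fun x => [x]).flatten = l := by
  induction l <;> simp [*]

def pieces (a : ℕ → α) : ℕ → List ℕ → List (List α)
  | _, [] => []
  | x, m :: t => factor a x m :: pieces a (x + m) t

lemma pieces_flatten (a : ℕ → α) : ∀ (ms : List ℕ) (x : ℕ),
    (pieces a x ms).flatten = factor a x ms.sum := by
  intro ms
  induction ms with
  | nil => intro x; simp [pieces, factor]
  | cons m t IH =>
    intro x
    simp only [pieces, List.flatten_cons, List.sum_cons, IH, factor_add]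

lemma pieces_length (a : ℕ → α) : ∀ (ms : List ℕ) (x : ℕ),
    (pieces a x ms).length = ms.length := by
  intro ms
  induction ms with
  | nil => intro x; simp [pieces]
  | cons m t IH => intro x; simp [pieces, IH]

lemma pieces_mem (a : ℕ → α) : ∀ (ms : List ℕ) (x : ℕ), Chain4 a x ms →
    ∀ p ∈ pieces a x ms, p.Palindrome ∧ 4 ∣ p.length := by
  intro ms
  induction ms with
  | nil => intro x _ p hp; simp [pieces] at hp
  | cons m t IH =>
    intro x hc p hp
    obtain ⟨h1, h2, h3⟩ := hc
    rcases List.mem_cons.1 hp with rfl | hp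
    · exact ⟨pal_factor h1, by rw [factor_length]; exact Nat.dvd_of_mod_eq_zero h2⟩
    · exact IH (x + m) h3 p hp

lemma decomp_chain (a : ℕ → α) : ∀ (ps : List (List α)) (x : ℕ),
    (∀ p ∈ ps, p.Palindrome) → ps.flatten = factor a x ((ps.map List.length).sum) →
    Chain a x (ps.map List.length) := by
  intro ps
  induction ps with
  | nil => intro x _ _; trivial
  | cons p t IHt =>
    intro x hpal hflat
    simp only [List.flatten_cons, List.map_cons, List.sum_cons] at hflat ⊢
    rw [factor_add] at hflat
    obtain ⟨h1, h2⟩ := List.append_inj hflat (by rw [factor_length])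
    refine ⟨?_, ?_⟩
    · have := hpal p (by simp)
      rw [h1] at this
      exact pal_of_palindrome this
    · exact IHt (x + p.length) (fun q hq => hpal q (by simp [hq])) h2

end Stmt19Aux

open Stmt19Aux in
theorem stmt19 {α : Type*} (a : ℕ → α) (hC : InC a) (k : ℕ) :
    ∃ ps : List (List α),
      ps.flatten = prefixWord a (4 * k) ∧ ps.length = P a (4 * k) ∧
      ∀ p ∈ ps, p.Palindrome ∧ 4 ∣ p.length := by
  classical
  obtain ⟨c, f, w, hw0, hrec, hfne, hwp⟩ := hC
  have hbp := blockProp hw0 hrec hfne hwp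
  have e3 : ∀ i, a (4*i+3) = a (4*i) := fun i => (hbp i).1
  have e12 : ∀ i, a (4*i+2) = a (4*i+1) := fun i => (hbp i).2.1
  have hne : ∀ i, a (4*i) ≠ a (4*i+1) := fun i => (hbp i).2.2
  have hSne : {m | ∃ ps : List (List α), ps.length = m ∧ (∀ p ∈ ps, p.Palindrome) ∧
      ps.flatten = prefixWord a (4 * k)}.Nonempty := by
    refine ⟨(prefixWord a (4 * k)).length, (prefixWord a (4 * k)).map (fun x => [x]), by simp, ?_,
      singleton_flatten _⟩
    intro p hp
    simp only [List.mem_map] at hp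
    obtain ⟨x, _, rfl⟩ := hp
    exact List.Palindrome.singleton x
  have hmem := Nat.sInf_mem hSne
  simp only [Set.mem_setOf_eq] at hmem
  obtain ⟨ps₀, hlen0, hpal0, hflat0⟩ := hmem
  have hPdef : P a (4 * k) = sInf {m | ∃ ps : List (List α), ps.length = m ∧
      (∀ p ∈ ps, p.Palindrome) ∧ ps.flatten = prefixWord a (4 * k)} := rfl
  have hWlen : (prefixWord a (4 * k)).length = 4 * k := by
    simp [prefixWord, factor]
  have hsum0 : (ps₀.map List.length).sum = 4 * k := by
    have := congrArg List.length hflat0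
    rwa [List.length_flatten, hWlen] at this
  have hchain : Chain a 0 (ps₀.map List.length) := by
    apply decomp_chain
    · exact hpal0
    · rw [hsum0]
      exact hflat0
  obtain ⟨ms, hc4, hsum', hlen'⟩ := main e3 e12 hne (ps₀.map List.length) 0 0 hchain
    (by norm_num) (by omega) (by omega) (by rw [Nat.zero_add, hsum0]; omega)
  have hms_sum : ms.sum = 4 * k := by
    rw [hsum0] at hsum'
    omega
  have hphi : phi 0 0 = 0 := by simp [phi]
  have hmsl : ms.length ≤ P a (4 * k) := by
    have hl : (ps₀.map List.length).length = P a (4 * k) := by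
      rw [List.length_map, hlen0, hPdef]
    omega
  refine ⟨pieces a 0 ms ++ List.replicate (P a (4 * k) - ms.length) [], ?_, ?_, ?_⟩
  · rw [List.flatten_append, pieces_flatten]
    have hrep : (List.replicate (P a (4 * k) - ms.length) ([] : List α)).flatten = [] := by
      simp
    rw [hrep, List.append_nil, hms_sum]
    rfl
  · rw [List.length_append, pieces_length, List.length_replicate]
    omega
  · intro p hp
    rcases List.mem_append.1 hp with hp | hp
    · exact pieces_mem a ms 0 hc4 p hp
    · have : p = [] := List.eq_of_mem_replicate hp
      subst this
      exact ⟨List.Palindrome.nil, by simp⟩
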